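/- arXiv:1809.00508 — 2 statements merged into one kernel-verified Lean document; each statement's English description precedes it below -/
import Mathlib

section
/- If δ_p is a forgetting operator for p, then for every finite knowledge base K, the set δ_p[K] = {δ_p(F,G) : F,G ∈ K} is logically equivalent to the canonical conservative retraction [K, L∖{p}] = {H ∈ Form(L∖{p}) : K ⊨ H}. -/
inductive Fm (V : Type) : Type
  | bot : Fm V
  | var : V → Fm V
  | not : Fm V → Fm V
  | and : Fm V → Fm V → Fm V
  | or  : Fm V → Fm V → Fm V
  | imp : Fm V → Fm V → Fm V
  | iff : Fm V → Fm V → Fm V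

def Fm.eval {V : Type} (v : V → Bool) : Fm V → Bool
  | .bot => false
  | .var p => v p
  | .not F => !(F.eval v)
  | .and F G => F.eval v && G.eval v
  | .or F G => F.eval v || G.eval v
  | .imp F G => !(F.eval v) || G.eval v
  | .iff F G => F.eval v == G.eval v

/-- The set of propositional variables occurring in a formula. -/
def Fm.vars {V : Type} : Fm V → Set V
  | .bot => ∅
  | .var q => {q}
  | .not F => F.vars
  | .and F G => F.vars ∪ G.vars
  | .or F G => F.vars ∪ G.vars
  | .imp F G => F.vars ∪ G.vars
  | .iff F G => F.vars ∪ G.vars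

/-- Logical entailment `K ⊨ F`. -/
def Entails {V : Type} (K : Set (Fm V)) (F : Fm V) : Prop :=
  ∀ v : V → Bool, (∀ G ∈ K, G.eval v = true) → F.eval v = true

/-- The canonical conservative retraction `[K, L∖{p}]`:
all formulas not containing `p` entailed by `K`. -/
def Retract {V : Type} (K : Set (Fm V)) (p : V) : Set (Fm V) :=
  {H | p ∉ H.vars ∧ Entails K H}

/-- `δ` is a forgetting operator for the variable `p`: its outputs avoid `p`, and
`δ F G` is logically equivalent to the canonical conservative retraction `[{F,G}, L∖{p}]`. -/
structure IsForgetting {V : Type} (p : V) (δ : Fm V → Fm V → Fm V) : Prop where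
  avoid : ∀ F G, p ∉ (δ F G).vars
  equiv : ∀ F G (v : V → Bool),
    (δ F G).eval v = true ↔ ∀ H ∈ Retract ({F, G} : Set (Fm V)) p, H.eval v = true

theorem eval_congr {V : Type} (F : Fm V) (v w : V → Bool)
    (h : ∀ q ∈ F.vars, v q = w q) : F.eval v = F.eval w := by
  induction F with
  | bot => rfl
  | var q => exact h q rfl
  | not F ih => simp only [Fm.eval, ih h]
  | and F G ihF ihG =>
      simp only [Fm.eval, ihF (fun q hq => h q (Or.inl hq)),
        ihG (fun q hq => h q (Or.inr hq))]
  | or F G ihF ihG =>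
      simp only [Fm.eval, ihF (fun q hq => h q (Or.inl hq)),
        ihG (fun q hq => h q (Or.inr hq))]
  | imp F G ihF ihG =>
      simp only [Fm.eval, ihF (fun q hq => h q (Or.inl hq)),
        ihG (fun q hq => h q (Or.inr hq))]
  | iff F G ihF ihG =>
      simp only [Fm.eval, ihF (fun q hq => h q (Or.inl hq)),
        ihG (fun q hq => h q (Or.inr hq))]

def lit {V : Type} (v : V → Bool) (q : V) : Fm V :=
  if v q then .var q else (Fm.var q).not

theorem lit_eval {V : Type} [DecidableEq V] (v w : V → Bool) (q : V) :
    (lit v q).eval w = true ↔ w q = v q := by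
  unfold lit
  cases hv : v q <;> simp [Fm.eval]

theorem lit_vars {V : Type} (v : V → Bool) (q r : V) (h : r ∈ (lit v q).vars) :
    r = q := by
  unfold lit at h
  split at h <;> exact h

def conj {V : Type} (l : List (Fm V)) : Fm V := l.foldr .and (.not .bot)

theorem conj_eval {V : Type} (l : List (Fm V)) (w : V → Bool) :
    (conj l).eval w = true ↔ ∀ F ∈ l, F.eval w = true := by
  induction l with
  | nil => simp [conj, Fm.eval]
  | cons F l ih =>
      simp only [conj, List.foldr, Fm.eval, Bool.and_eq_true, List.mem_cons] at ih ⊢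
      rw [ih]
      constructor
      · rintro ⟨h1, h2⟩ G (rfl | hG)
        · exact h1
        · exact h2 G hG
      · intro h
        exact ⟨h F (Or.inl rfl), fun G hG => h G (Or.inr hG)⟩

theorem conj_vars {V : Type} (l : List (Fm V)) (p : V)
    (h : ∀ F ∈ l, p ∉ F.vars) : p ∉ (conj l).vars := by
  induction l with
  | nil => simp [conj, Fm.vars]
  | cons F l ih =>
      intro hc
      rcases hc with hc | hc
      · exact h F List.mem_cons_self hc
      · exact ih (fun G hG => h G (List.mem_cons_of_mem _ hG)) hc

noncomputable def chi {V : Type} [Fintype V] [DecidableEq V] (p : V) (v : V → Bool) : Fm V :=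
  conj (((Finset.univ.erase p).toList).map (lit v))

theorem chi_vars {V : Type} [Fintype V] [DecidableEq V] (p : V) (v : V → Bool) :
    p ∉ (chi p v).vars := by
  apply conj_vars
  intro F hF
  rcases List.mem_map.mp hF with ⟨q, hq, rfl⟩
  intro hc
  have := lit_vars v q p hc
  subst this
  exact (Finset.mem_erase.mp (Finset.mem_toList.mp hq)).1 rfl

theorem chi_eval {V : Type} [Fintype V] [DecidableEq V] (p : V) (v w : V → Bool) :
    (chi p v).eval w = true ↔ ∀ q, q ≠ p → w q = v q := by
  rw [chi, conj_eval]
  constructor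
  · intro h q hq
    exact (lit_eval v w q).mp (h _ (List.mem_map.mpr ⟨q,
      Finset.mem_toList.mpr (Finset.mem_erase.mpr ⟨hq, Finset.mem_univ _⟩), rfl⟩))
  · intro h F hF
    rcases List.mem_map.mp hF with ⟨q, hq, rfl⟩
    exact (lit_eval v w q).mpr (h q (Finset.mem_erase.mp (Finset.mem_toList.mp hq)).1)

theorem pair_sat {V : Type} [Fintype V] [DecidableEq V] (p : V) (F G : Fm V) (v : V → Bool)
    (h : ∀ H ∈ Retract ({F, G} : Set (Fm V)) p, H.eval v = true) :
    ∃ b, F.eval (Function.update v p b) = true ∧ G.eval (Function.update v p b) = true := by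
  by_contra hc
  push_neg at hc
  have hmem : (chi p v).not ∈ Retract ({F, G} : Set (Fm V)) p := by
    refine ⟨chi_vars p v, ?_⟩
    intro w hw
    have hF := hw F (Or.inl rfl)
    have hG := hw G (Or.inr rfl)
    simp only [Fm.eval, Bool.not_eq_true'] at *
    by_contra hne
    have hchi : (chi p v).eval w = true := by
      cases hh : (chi p v).eval w
      · exact absurd hh hne
      · rfl
    have hag := (chi_eval p v w).mp hchi
    have hwup : Function.update v p (w p) = w := by
      funext q
      by_cases hq : q = p
      · subst hq; simp
      · simp [Function.update_of_ne hq, hag q hq]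
    have h1 := hc (w p)
    rw [hwup] at h1
    exact h1 hF hG
  have := h _ hmem
  simp only [Fm.eval, Bool.not_eq_true'] at this
  have : (chi p v).eval v = true := (chi_eval p v v).mpr (fun q _ => rfl)
  simp_all

/-- `δ_p[K] = {δ_p(F,G) : F,G ∈ K}` is equivalent to the canonical conservative
retraction `[K, L∖{p}]`. -/
theorem stmt9 {V : Type} [Fintype V] (p : V) (δ : Fm V → Fm V → Fm V)
    (hδ : IsForgetting p δ) (K : Set (Fm V)) (hK : K.Finite) :
    ∀ v : V → Bool,
      (∀ H ∈ Set.image2 δ K K, H.eval v = true) ↔ (∀ H ∈ Retract K p, H.eval v = true) := by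
  classical
  intro v
  constructor
  · intro hall H hH
    obtain ⟨hpH, hent⟩ := hH
    have hb : ∃ b, ∀ G ∈ K, G.eval (Function.update v p b) = true := by
      by_contra hc
      push_neg at hc
      obtain ⟨F, hFK, hF⟩ := hc true
      obtain ⟨G, hGK, hG⟩ := hc false
      have hδv : (δ F G).eval v = true := hall _ (Set.mem_image2_of_mem hFK hGK)
      have := (hδ.equiv F G v).mp hδv
      obtain ⟨b, hbF, hbG⟩ := pair_sat p F G v this
      cases b
      · exact hG hbG
      · exact hF hbF
    obtain ⟨b, hb⟩ := hb
    have : H.eval (Function.update v p b) = true := hent _ hb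
    rw [← this]
    apply eval_congr
    intro q hq
    have : q ≠ p := fun h => hpH (h ▸ hq)
    simp [Function.update_of_ne this]
  · intro hall H hH
    rcases Set.mem_image2.mp hH with ⟨F, hF, G, hG, rfl⟩
    rw [hδ.equiv F G v]
    intro H hH
    obtain ⟨hpH, hent⟩ := hH
    refine hall H ⟨hpH, ?_⟩
    intro w hw
    exact hent w (fun X hX => by rcases hX with rfl | rfl
                                 · exact hw X hF
                                 · exact hw X hG)
end

section
/- The independence rule is a forgetting operator: for any formulas F_1, F_2 and variable p, ∂_p(F_1,F_2) is logically equivalent to the canonical conservative retraction [{F_1,F_2}, L∖{p}]; equivalently, a valuation v on L∖{p} satisfies ∂_p(F_1,F_2) iff v extends to a model of F_1 ∧ F_2. -/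
noncomputable def Fm.poly {n : ℕ} : Fm (Fin n) → MvPolynomial (Fin n) (ZMod 2)
  | .bot => 0
  | .var i => MvPolynomial.X i
  | .not F => 1 + F.poly
  | .and F G => F.poly * G.poly
  | .or F G => F.poly + G.poly + F.poly * G.poly
  | .imp F G => 1 + F.poly + F.poly * G.poly
  | .iff F G => 1 + F.poly + G.poly

def bval (b : Bool) : ZMod 2 := if b then 1 else 0

/-- The map `Φ` reducing every exponent of a polynomial to at most 1
(the multilinear representative modulo `I_2`). -/
noncomputable def squash {n : ℕ} (a : MvPolynomial (Fin n) (ZMod 2)) :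
    MvPolynomial (Fin n) (ZMod 2) :=
  a.support.sum fun m =>
    MvPolynomial.monomial (Finsupp.mapRange (fun e => min e 1) (by simp) m) (a.coeff m)

/-- The polynomial projection `π = Φ ∘ P`. -/
noncomputable def Fm.proj {n : ℕ} (F : Fm (Fin n)) : MvPolynomial (Fin n) (ZMod 2) :=
  squash F.poly


open MvPolynomial

lemma zmod2_mul_self (x : ZMod 2) : x * x = x := by revert x; decide

lemma zmod2_pow (x : ZMod 2) (e : ℕ) : x ^ e = x ^ min e 1 := by
  rcases Nat.eq_zero_or_pos e with h | h
  · simp [h]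
  · rw [min_eq_right h, pow_one]
    induction e with
    | zero => omega
    | succ k ih =>
      rcases Nat.eq_zero_or_pos k with hk | hk
      · simp [hk]
      · rw [pow_succ, ih hk, zmod2_mul_self]

lemma eval_squash {n : ℕ} (x : Fin n → ZMod 2) (a : MvPolynomial (Fin n) (ZMod 2)) :
    eval x (squash a) = eval x a := by
  unfold squash
  conv_rhs => rw [a.as_sum]
  rw [map_sum, map_sum]
  refine Finset.sum_congr rfl fun m _ => ?_
  rw [eval_monomial, eval_monomial]
  congr 1
  rw [Finsupp.prod_mapRange_index (by simp)]
  exact Finsupp.prod_congr fun i _ => (zmod2_pow (x i) (m i)).symm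

lemma squash_support {n : ℕ} (a : MvPolynomial (Fin n) (ZMod 2)) :
    ∀ m ∈ (squash a).support, ∀ i, m i ≤ 1 := by
  intro m hm i
  unfold squash at hm
  have := MvPolynomial.support_sum hm
  simp only [Finset.mem_biUnion] at this
  obtain ⟨m', _, hm'⟩ := this
  have := MvPolynomial.support_monomial_subset hm'
  simp only [Finset.mem_singleton] at this
  subst this
  simp [Finsupp.mapRange_apply]

/-- The substitution `F{p/¬p}`. -/
def substNeg {n : ℕ} (p : Fin n) : Fm (Fin n) → Fm (Fin n)
  | .bot => .bot
  | .var q => if q = p then .not (.var p) else .var q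
  | .not F => .not (substNeg p F)
  | .and F G => .and (substNeg p F) (substNeg p G)
  | .or F G => .or (substNeg p F) (substNeg p G)
  | .imp F G => .imp (substNeg p F) (substNeg p G)
  | .iff F G => .iff (substNeg p F) (substNeg p G)

/-- The Boolean derivative `∂F/∂p`, in its semantic form `¬(F{p/¬p} ↔ F)`. -/
def derivFm {n : ℕ} (p : Fin n) (F : Fm (Fin n)) : Fm (Fin n) :=
  Fm.not (Fm.iff (substNeg p F) F)

/-- The part `b` of the decomposition `a = b + x_p·c` (free of `x_p`): `a` with `x_p := 0`. -/
noncomputable def bPart {n : ℕ} (p : Fin n) (a : MvPolynomial (Fin n) (ZMod 2)) :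
    MvPolynomial (Fin n) (ZMod 2) :=
  MvPolynomial.aeval (fun j : Fin n => if j = p then 0 else MvPolynomial.X j) a

/-- The part `c` of the decomposition `a = b + x_p·c` of a multilinear polynomial:
the formal partial derivative of `a` with respect to `x_p`. -/
noncomputable def cPart {n : ℕ} (p : Fin n) (a : MvPolynomial (Fin n) (ZMod 2)) :
    MvPolynomial (Fin n) (ZMod 2) :=
  MvPolynomial.pderiv p a

/-- The independence rule on polynomials:
`∂_{x_p}(a₁,a₂) = Φ(1 + (1 + b₁b₂)·(1 + (b₁+c₁)(b₂+c₂)))`. -/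
noncomputable def indRule {n : ℕ} (p : Fin n) (a₁ a₂ : MvPolynomial (Fin n) (ZMod 2)) :
    MvPolynomial (Fin n) (ZMod 2) :=
  squash (1 + (1 + bPart p a₁ * bPart p a₂) *
    (1 + (bPart p a₁ + cPart p a₁) * (bPart p a₂ + cPart p a₂)))


lemma eval_poly {n : ℕ} (v : Fin n → Bool) (F : Fm (Fin n)) :
    eval (fun i => bval (v i)) F.poly = bval (F.eval v) := by
  induction F with
  | bot => simp [Fm.poly, Fm.eval, bval]
  | var i => simp [Fm.poly, Fm.eval]
  | not F ih =>
    simp only [Fm.poly, Fm.eval, map_add, map_one, ih]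
    cases F.eval v <;> decide
  | and F G ihF ihG =>
    simp only [Fm.poly, Fm.eval, map_mul, ihF, ihG]
    cases F.eval v <;> cases G.eval v <;> decide
  | or F G ihF ihG =>
    simp only [Fm.poly, Fm.eval, map_add, map_mul, ihF, ihG]
    cases F.eval v <;> cases G.eval v <;> decide
  | imp F G ihF ihG =>
    simp only [Fm.poly, Fm.eval, map_add, map_mul, map_one, ihF, ihG]
    cases F.eval v <;> cases G.eval v <;> decide
  | iff F G ihF ihG =>
    simp only [Fm.poly, Fm.eval, map_add, map_one, ihF, ihG]
    cases F.eval v <;> cases G.eval v <;> decide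

lemma eval_bPart {n : ℕ} (p : Fin n) (x : Fin n → ZMod 2)
    (a : MvPolynomial (Fin n) (ZMod 2)) :
    eval x (bPart p a) = eval (Function.update x p 0) a := by
  unfold bPart
  rw [aeval_def, eval_eval₂]
  have h1 : ((eval x).comp (algebraMap (ZMod 2) (MvPolynomial (Fin n) (ZMod 2))))
      = RingHom.id _ := by
    ext r; simp
  rw [h1, eval₂_id]
  have h2 : (fun s => (eval x) (if s = p then (0 : MvPolynomial (Fin n) (ZMod 2)) else X s))
      = Function.update x p 0 := by
    funext i
    rcases eq_or_ne i p with h | h <;> simp [h, Function.update_apply]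
  rw [h2]


lemma eval_decomp {n : ℕ} (p : Fin n) (a : MvPolynomial (Fin n) (ZMod 2))
    (h : ∀ m ∈ a.support, m p ≤ 1) (x : Fin n → ZMod 2) :
    eval (Function.update x p 1) a = eval (Function.update x p 0) a + eval x (cPart p a) := by
  unfold cPart
  rw [MvPolynomial.as_sum a]
  rw [map_sum, map_sum, map_sum, map_sum, ← Finset.sum_add_distrib]
  refine Finset.sum_congr rfl fun m hm => ?_
  have hmp := h m hm
  rw [pderiv_monomial, eval_monomial, eval_monomial, eval_monomial]
  rw [Finsupp.prod_fintype _ _ (fun i => pow_zero _),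
      Finsupp.prod_fintype _ _ (fun i => pow_zero _),
      Finsupp.prod_fintype _ _ (fun i => pow_zero _)]
  rw [← Finset.mul_prod_erase Finset.univ _ (Finset.mem_univ p)]
  rw [← Finset.mul_prod_erase Finset.univ _ (Finset.mem_univ p)]
  rw [← Finset.mul_prod_erase Finset.univ _ (Finset.mem_univ p)]
  have hup1 : Function.update x p (1 : ZMod 2) p = 1 := Function.update_self _ _ _
  have hup0 : Function.update x p (0 : ZMod 2) p = 0 := Function.update_self _ _ _
  have hprod1 : ∀ (y : ZMod 2),
      (∏ i ∈ Finset.univ.erase p, Function.update x p y i ^ m i)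
        = ∏ i ∈ Finset.univ.erase p, x i ^ m i := by
    intro y
    refine Finset.prod_congr rfl fun i hi => ?_
    rw [Function.update_of_ne (Finset.mem_erase.mp hi).1]
  have esubne : ∀ i : Fin n, i ≠ p → (m - Finsupp.single p (1:ℕ)) i = m i := by
    intro i h'
    simp [Finsupp.tsub_apply, Finsupp.single_apply, Ne.symm h']
  interval_cases hc : m p
  · -- m p = 0
    have esubp : (m - Finsupp.single p (1:ℕ)) p = 0 := by
      simp [Finsupp.tsub_apply, hc]
    rw [hup1, hup0, esubp]
    simp only [pow_zero, one_mul, Nat.cast_zero, mul_zero, zero_mul, add_zero]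
    rw [hprod1, hprod1]
  · -- m p = 1
    have esubp : (m - Finsupp.single p (1:ℕ)) p = 0 := by
      simp [Finsupp.tsub_apply, hc]
    rw [hup1, hup0, esubp]
    simp only [pow_one, pow_zero, one_mul, zero_mul, mul_zero, zero_add, Nat.cast_one, mul_one]
    rw [hprod1]
    congr 1
    refine Finset.prod_congr rfl fun i hi => ?_
    rw [esubne i (Finset.mem_erase.mp hi).1]

/-- The independence rule is a forgetting operator: a valuation `v` (regarded as a
valuation on `L∖{p}`) satisfies `∂_p(F₁,F₂)` iff it extends, modifying only `p`, to a
model of `F₁ ∧ F₂`. Here `∂_p(F₁,F₂) = Θ(∂_{x_p}(π F₁, π F₂))` is any formula `D` whose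
semantics is given by evaluation of the polynomial `∂_{x_p}(π F₁, π F₂)`. -/
theorem stmt17 {n : ℕ} (p : Fin n) (F₁ F₂ D : Fm (Fin n))
    (hD : ∀ v : Fin n → Bool,
      bval (D.eval v) =
        MvPolynomial.eval (fun i => bval (v i)) (indRule p F₁.proj F₂.proj)) :
    ∀ v : Fin n → Bool,
      D.eval v = true ↔
        ∃ vh : Fin n → Bool, (∀ q : Fin n, q ≠ p → vh q = v q) ∧
          F₁.eval vh = true ∧ F₂.eval vh = true := by
  intro v
  set e : Fin n → ZMod 2 := fun i => bval (v i) with he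
  have hpt : ∀ b : Bool,
      Function.update e p (bval b) = fun i => bval (Function.update v p b i) := by
    intro b
    funext i
    rcases eq_or_ne i p with h | h <;> simp [h, Function.update_apply, he]
  have hproj : ∀ (F : Fm (Fin n)) (b : Bool),
      eval (Function.update e p (bval b)) F.proj = bval (F.eval (Function.update v p b)) := by
    intro F b
    rw [hpt b, Fm.proj, eval_squash, eval_poly]
  have hb : ∀ F : Fm (Fin n),
      eval e (bPart p F.proj) = bval (F.eval (Function.update v p false)) := by
    intro F
    rw [eval_bPart, show (0 : ZMod 2) = bval false from rfl, hproj]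
  have hbc : ∀ F : Fm (Fin n),
      eval e (bPart p F.proj) + eval e (cPart p F.proj)
        = bval (F.eval (Function.update v p true)) := by
    intro F
    have hd := eval_decomp p F.proj (fun m hm => squash_support _ m hm p) e
    rw [show (1 : ZMod 2) = bval true from rfl] at hd
    rw [show (0 : ZMod 2) = bval false from rfl] at hd
    rw [hproj, hproj] at hd
    rw [hb F]
    exact hd.symm
  have key := hD v
  rw [← he] at key
  unfold indRule at key
  rw [eval_squash] at key
  simp only [map_add, map_mul, map_one] at key
  rw [hbc F₁, hbc F₂] at key
  rw [hb F₁, hb F₂] at key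
  have equiv : (∃ vh : Fin n → Bool, (∀ q : Fin n, q ≠ p → vh q = v q) ∧
      F₁.eval vh = true ∧ F₂.eval vh = true) ↔
      ((F₁.eval (Function.update v p false) = true ∧ F₂.eval (Function.update v p false) = true)
        ∨ (F₁.eval (Function.update v p true) = true ∧
            F₂.eval (Function.update v p true) = true)) := by
    constructor
    · rintro ⟨vh, hag, h1, h2⟩
      have hvh : vh = Function.update v p (vh p) := by
        funext q
        rcases eq_or_ne q p with h | h
        · subst h; exact (Function.update_self q (vh q) v).symm
        · simp [Function.update_of_ne h, hag q h]
      cases hv : vh p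
      · left; rw [hvh, hv] at h1 h2; exact ⟨h1, h2⟩
      · right; rw [hvh, hv] at h1 h2; exact ⟨h1, h2⟩
    · rintro (⟨h1, h2⟩ | ⟨h1, h2⟩)
      · exact ⟨Function.update v p false, fun q hq => Function.update_of_ne hq false v, h1, h2⟩
      · exact ⟨Function.update v p true, fun q hq => Function.update_of_ne hq true v, h1, h2⟩
  rw [equiv]
  revert key
  cases D.eval v <;>
    cases h1 : F₁.eval (Function.update v p false) <;>
    cases h2 : F₂.eval (Function.update v p false) <;>
    cases h3 : F₁.eval (Function.update v p true) <;>
    cases h4 : F₂.eval (Function.update v p true) <;>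
      simp [bval] <;> decide
end
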